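/- Let A ⊆ 𝔽₂ⁿ be a nonempty finite set, V ⊆ 𝔽₂ⁿ a linear subspace, U_A uniform on A, U_V uniform on V, and T any 𝔽₂ⁿ-valued random variable, with U_A, U_V, T mutually independent. Then D_KL(U_V ‖ U_A + T + U_V) = −log₂ Pr[U_A + T ∈ V], and D_KL(U_V ‖ U_A + T) ≥ D_KL(U_V ‖ U_A + T + U_V). -/

import Mathlib

open scoped BigOperators Pointwise Classical

noncomputable section

/-- `𝔽₂ⁿ`, the `n`-dimensional vector space over the field with two elements. -/
abbrev F2 (n : ℕ) : Type := Fin n → ZMod 2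

/-- `f` is a probability distribution on the finite type `α`. -/
def IsDist {α : Type*} [Fintype α] (f : α → ℝ) : Prop :=
  (∀ x, 0 ≤ f x) ∧ ∑ x, f x = 1

/-- Shannon entropy (base 2) of a distribution on a finite type. -/
def ent {α : Type*} [Fintype α] (f : α → ℝ) : ℝ :=
  ∑ x, -(f x * Real.logb 2 (f x))

/-- Distribution of `X + Y` for independent `X ∼ f`, `Y ∼ g`. -/
def addDist {α : Type*} [Fintype α] [AddGroup α] (f g : α → ℝ) : α → ℝ :=
  fun s => ∑ x, f x * g (s - x)

/-- Distribution of `X - Y` for independent `X ∼ f`, `Y ∼ g`. -/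
def subDist {α : Type*} [Fintype α] [AddGroup α] (f g : α → ℝ) : α → ℝ :=
  fun s => ∑ x, f x * g (x - s)

/-- Entropic Ruzsa distance `d[X;Y] = H(X' + Y') - (H(X) + H(Y))/2` (in `𝔽₂ⁿ`
addition coincides with subtraction). -/
def rdist {α : Type*} [Fintype α] [AddGroup α] (f g : α → ℝ) : ℝ :=
  ent (addDist f g) - (ent f + ent g) / 2

/-- Entropic Ruzsa distance `d[X;Y] = H(X' - Y') - (H(X) + H(Y))/2` in a general group. -/
def rdistSub {α : Type*} [Fintype α] [AddGroup α] (f g : α → ℝ) : ℝ :=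
  ent (subDist f g) - (ent f + ent g) / 2

/-- Pushforward of a distribution along a map. -/
def pmap {α β : Type*} [Fintype α] (h : α → β) (π : α → ℝ) : β → ℝ :=
  fun b => ∑ a, if h a = b then π a else 0

/-- First marginal of a joint distribution. -/
def margFst {α γ : Type*} [Fintype γ] (π : α × γ → ℝ) : α → ℝ :=
  fun a => ∑ z, π (a, z)

/-- Second marginal of a joint distribution. -/
def margSnd {α γ : Type*} [Fintype α] (π : α × γ → ℝ) : γ → ℝ :=
  fun z => ∑ a, π (a, z)

/-- Conditional distribution of the first coordinate given that the second equals `z`. -/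
def condDist {α γ : Type*} [Fintype α] (π : α × γ → ℝ) (z : γ) : α → ℝ :=
  fun a => π (a, z) / margSnd π z

/-- Conditional entropy `H(X | Z) = E_{z ∼ Z} H(X |_{Z = z})`. -/
def condEnt {α γ : Type*} [Fintype α] [Fintype γ] (π : α × γ → ℝ) : ℝ :=
  ∑ z, margSnd π z * ent (condDist π z)

/-- Mutual information `I(X : Y) = H(X) + H(Y) - H(X, Y)`. -/
def mutInfo {α β : Type*} [Fintype α] [Fintype β] (π : α × β → ℝ) : ℝ :=
  ent (margFst π) + ent (margSnd π) - ent π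

/-- Conditional mutual information `I(X : Y | Z) = E_{z ∼ Z} I(X|_{Z=z} : Y|_{Z=z})`. -/
def condMutInfo {α β γ : Type*} [Fintype α] [Fintype β] [Fintype γ]
    (π : (α × β) × γ → ℝ) : ℝ :=
  ∑ z, margSnd π z * mutInfo (condDist π z)

/-- Conditioned Ruzsa distance `d[(X;Y) | Z] = E_{z ∼ Z} d[X|_{Z=z} ; Y|_{Z=z}]`, where
inside the expectation the two conditioned variables are treated as independent. -/
def condRdist {α γ : Type*} [Fintype α] [Fintype γ] [AddGroup α]
    (π : (α × α) × γ → ℝ) : ℝ :=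
  ∑ z, margSnd π z * rdist (pmap Prod.fst (condDist π z)) (pmap Prod.snd (condDist π z))

/-- Doubly conditioned Ruzsa distance `d[X | Z ; Y | W] = E_{z,w} d[X|_{Z=z} ; Y|_{W=w}]`
for `(X,Z)` independent of `(Y,W)`. -/
def condRdist2 {α γ δ : Type*} [Fintype α] [Fintype γ] [Fintype δ] [AddGroup α]
    (π : α × γ → ℝ) (ρ : α × δ → ℝ) : ℝ :=
  ∑ z, ∑ w, margSnd π z * margSnd ρ w * rdist (condDist π z) (condDist ρ w)

/-- The uniform distribution on a finite set `A`. -/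
def unifFin {α : Type*} [Fintype α] (A : Finset α) : α → ℝ :=
  fun x => if x ∈ A then (A.card : ℝ)⁻¹ else 0

/-- The uniform distribution on a set `S`. -/
def unifSet {α : Type*} [Fintype α] (S : Set α) : α → ℝ :=
  fun x => if x ∈ S then (Nat.card S : ℝ)⁻¹ else 0

/-- Kullback–Leibler divergence (base-2 logarithm), with value `⊤` if the support of `f`
is not contained in the support of `g`. -/
def KL {α : Type*} [Fintype α] (f g : α → ℝ) : EReal :=
  if ∀ x, g x = 0 → f x = 0 then
    ((∑ x, f x * Real.logb 2 (f x / g x) : ℝ) : EReal)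
  else ⊤

/-- `τ⁻(X) := inf_T D_KL(X ‖ U_A + T)`, the infimum over all `𝔽₂ⁿ`-valued random
variables `T` independent of `U_A`. -/
def tauMinus {n : ℕ} (A : Finset (F2 n)) (f : F2 n → ℝ) : EReal :=
  ⨅ t : {t : F2 n → ℝ // IsDist t}, KL f (addDist (unifFin A) t.1)

/-- `τ⁺(X) := τ⁻(X) + H(X) - H(U_A)`. -/
def tauPlus {n : ℕ} (A : Finset (F2 n)) (f : F2 n → ℝ) : EReal :=
  tauMinus A f + ((ent f - ent (unifFin A) : ℝ) : EReal)

/-- `−log₂`, as an extended-real-valued function on `[0, ∞)`, with `−log₂ 0 = +∞`. -/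
def neglog2 (p : ℝ) : EReal := if p = 0 then ⊤ else ((-(Real.logb 2 p) : ℝ) : EReal)

/-- for `U_A` uniform on a nonempty finite `A ⊆ 𝔽₂ⁿ`, `U_V` uniform on a
linear subspace `V`, and any `𝔽₂ⁿ`-valued `T ∼ t`, with `U_A, U_V, T` mutually independent:
`D_KL(U_V ‖ U_A + T + U_V) = −log₂ Pr[U_A + T ∈ V]`, and
`D_KL(U_V ‖ U_A + T) ≥ D_KL(U_V ‖ U_A + T + U_V)`. -/
theorem stmt_19 (n : ℕ) (A : Finset (F2 n)) (hA : A.Nonempty)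
    (V : Submodule (ZMod 2) (F2 n)) (t : F2 n → ℝ) (ht : IsDist t) :
    (KL (unifSet (V : Set (F2 n)))
        (addDist (addDist (unifFin A) t) (unifSet (V : Set (F2 n))))
      = neglog2 (∑ x, if x ∈ V then addDist (unifFin A) t x else 0))
    ∧ KL (unifSet (V : Set (F2 n)))
        (addDist (addDist (unifFin A) t) (unifSet (V : Set (F2 n))))
      ≤ KL (unifSet (V : Set (F2 n))) (addDist (unifFin A) t) := by
  classical
  set f : F2 n → ℝ := unifSet (V : Set (F2 n)) with hf
  set g : F2 n → ℝ := addDist (unifFin A) t with hg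
  set VF : Finset (F2 n) := Finset.univ.filter (fun x => x ∈ V) with hVF
  set N : ℕ := Nat.card (V : Set (F2 n)) with hN
  have hNcard : N = VF.card := by
    rw [hN, Nat.card_eq_fintype_card, hVF]
    convert Fintype.card_subtype (fun x => x ∈ V) using 2
    rfl
  have hNpos : 0 < N := by
    have : Nonempty (V : Set (F2 n)) := ⟨⟨0, V.zero_mem⟩⟩
    exact Nat.card_pos
  have hNR : (0:ℝ) < (N:ℝ) := by exact_mod_cast hNpos
  have hNinv : (0:ℝ) < (N:ℝ)⁻¹ := by positivity
  have hfval : ∀ x, f x = if x ∈ V then (N:ℝ)⁻¹ else 0 := by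
    intro x; simp [hf, unifSet, hN]
  have hg0 : ∀ x, 0 ≤ g x := by
    intro x
    refine Finset.sum_nonneg fun y _ => mul_nonneg ?_ (ht.1 _)
    unfold unifFin; split <;> positivity
  set p : ℝ := ∑ x ∈ VF, g x with hp
  have hp0 : 0 ≤ p := Finset.sum_nonneg fun x _ => hg0 x
  have hpsum : (∑ x, if x ∈ V then g x else 0) = p := by
    rw [hp, hVF, Finset.sum_filter]
  have hconv : ∀ s ∈ V, addDist g f s = p * (N:ℝ)⁻¹ := by
    intro s hs
    have : ∀ x : F2 n, (s - x ∈ V ↔ x ∈ V) := by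
      intro x
      constructor
      · intro h; have := V.sub_mem hs h; simpa using this
      · intro h; exact V.sub_mem hs h
    unfold addDist
    calc ∑ x, g x * f (s - x) = ∑ x, (if x ∈ V then g x * (N:ℝ)⁻¹ else 0) := by
          refine Finset.sum_congr rfl fun x _ => ?_
          rw [hfval]
          rw [if_congr (this x) rfl rfl]
          split <;> simp
      _ = ∑ x ∈ VF, g x * (N:ℝ)⁻¹ := by rw [hVF, Finset.sum_filter]
      _ = p * (N:ℝ)⁻¹ := by rw [hp, Finset.sum_mul]
  rw [hpsum]
  by_cases hpz : p = 0
  · -- zero-probability case: both KL's are ⊤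
    have h0V : (0 : F2 n) ∈ V := V.zero_mem
    have hLtop : KL f (addDist g f) = ⊤ := by
      rw [KL, if_neg]
      intro hc
      have h1 : addDist g f 0 = 0 := by rw [hconv 0 h0V, hpz, zero_mul]
      have h2 := hc 0 h1
      rw [hfval, if_pos h0V] at h2
      exact (ne_of_gt hNinv) h2
    have hRtop : KL f g = ⊤ := by
      rw [KL, if_neg]
      intro hc
      have hg00 : g 0 = 0 := by
        refine (Finset.sum_eq_zero_iff_of_nonneg (fun x _ => hg0 x)).1 hpz 0 ?_
        simp [hVF, h0V]
      have h2 := hc 0 hg00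
      rw [hfval, if_pos h0V] at h2
      exact (ne_of_gt hNinv) h2
    rw [hLtop, hRtop, hpz]
    exact ⟨by simp [neglog2], le_refl ⊤⟩
  · have hppos : 0 < p := lt_of_le_of_ne hp0 (Ne.symm hpz)
    have hpN : 0 < p * (N:ℝ)⁻¹ := mul_pos hppos hNinv
    -- compute the LHS KL
    have hLcond : ∀ x, addDist g f x = 0 → f x = 0 := by
      intro x hx
      rw [hfval]
      split
      · next h => rw [hconv x h] at hx; exact absurd hx (ne_of_gt hpN)
      · rfl
    have hLval : KL f (addDist g f) = ((-(Real.logb 2 p) : ℝ) : EReal) := by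
      rw [KL, if_pos hLcond]
      congr 1
      calc ∑ x, f x * Real.logb 2 (f x / addDist g f x)
          = ∑ x, (if x ∈ V then (N:ℝ)⁻¹ * Real.logb 2 ((N:ℝ)⁻¹ / (p * (N:ℝ)⁻¹)) else 0) := by
            refine Finset.sum_congr rfl fun x _ => ?_
            rw [hfval]
            split
            · next h => rw [hconv x h]
            · simp
        _ = ∑ x ∈ VF, (N:ℝ)⁻¹ * Real.logb 2 ((N:ℝ)⁻¹ / (p * (N:ℝ)⁻¹)) := by
            rw [hVF, Finset.sum_filter]
        _ = (VF.card : ℝ) * ((N:ℝ)⁻¹ * Real.logb 2 ((N:ℝ)⁻¹ / (p * (N:ℝ)⁻¹))) := by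
            rw [Finset.sum_const, nsmul_eq_mul]
        _ = -(Real.logb 2 p) := by
            rw [← hNcard]
            have : (N:ℝ)⁻¹ / (p * (N:ℝ)⁻¹) = p⁻¹ := by
              field_simp
            rw [this, Real.logb_inv]
            field_simp
    refine ⟨?_, ?_⟩
    · rw [hLval, neglog2, if_neg hpz]
    · -- the inequality
      by_cases hz : ∃ x ∈ VF, g x = 0
      · obtain ⟨x, hxVF, hxz⟩ := hz
        have hxV : x ∈ V := by simpa [hVF] using hxVF
        have : KL f g = ⊤ := by
          rw [KL, if_neg]
          intro hc
          have h2 := hc x hxz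
          rw [hfval, if_pos hxV] at h2
          exact (ne_of_gt hNinv) h2
        rw [this]; exact le_top
      · push_neg at hz
        have hgpos : ∀ x ∈ VF, 0 < g x := fun x hx => lt_of_le_of_ne (hg0 x) (Ne.symm (hz x hx))
        have hRcond : ∀ x, g x = 0 → f x = 0 := by
          intro x hx
          rw [hfval]
          split
          · next h =>
            exact absurd hx (hz x (by simp [hVF, h]))
          · rfl
        rw [hLval, KL, if_pos hRcond]
        rw [EReal.coe_le_coe_iff]
        have hsum_eq : ∑ x, f x * Real.logb 2 (f x / g x)
            = ∑ x ∈ VF, (N:ℝ)⁻¹ * Real.logb 2 ((N:ℝ)⁻¹ / g x) := by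
          rw [hVF, Finset.sum_filter]
          refine Finset.sum_congr rfl fun x _ => ?_
          rw [hfval]
          split <;> simp
        rw [hsum_eq]
        -- Jensen
        have hw1 : ∑ _x ∈ VF, (N:ℝ)⁻¹ = 1 := by
          rw [Finset.sum_const, nsmul_eq_mul, ← hNcard]
          field_simp
        have hjensen : ∑ x ∈ VF, (N:ℝ)⁻¹ * Real.log (g x)
            ≤ Real.log ((N:ℝ)⁻¹ * p) := by
          have h := (strictConcaveOn_log_Ioi.concaveOn).le_map_sum
            (t := VF) (w := fun _ => (N:ℝ)⁻¹) (p := g)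
            (fun i _ => le_of_lt hNinv) hw1 (fun i hi => Set.mem_Ioi.2 (hgpos i hi))
          rw [hp]
          simpa [smul_eq_mul, ← Finset.mul_sum] using h
        have hlog2 : (0:ℝ) < Real.log 2 := Real.log_pos one_lt_two
        have key : ∑ x ∈ VF, (N:ℝ)⁻¹ * Real.logb 2 ((N:ℝ)⁻¹ / g x)
            = Real.logb 2 (N:ℝ)⁻¹ - (∑ x ∈ VF, (N:ℝ)⁻¹ * Real.log (g x)) / Real.log 2 := by
          have : ∀ x ∈ VF, (N:ℝ)⁻¹ * Real.logb 2 ((N:ℝ)⁻¹ / g x)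
              = (N:ℝ)⁻¹ * Real.logb 2 (N:ℝ)⁻¹ - (N:ℝ)⁻¹ * Real.log (g x) / Real.log 2 := by
            intro x hx
            rw [Real.logb_div (ne_of_gt hNinv) (ne_of_gt (hgpos x hx))]
            simp only [Real.logb]
            ring
          rw [Finset.sum_congr rfl this, Finset.sum_sub_distrib, ← Finset.sum_mul, hw1,
            one_mul, ← Finset.sum_div]
        rw [key]
        have hlogb : Real.logb 2 ((N:ℝ)⁻¹ * p)
            = Real.logb 2 (N:ℝ)⁻¹ + Real.logb 2 p :=
          Real.logb_mul (ne_of_gt hNinv) (ne_of_gt hppos)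
        have hdiv : Real.log ((N:ℝ)⁻¹ * p) / Real.log 2
            = Real.logb 2 (N:ℝ)⁻¹ + Real.logb 2 p := by rw [← hlogb]; rfl
        have h1 : (∑ x ∈ VF, (N:ℝ)⁻¹ * Real.log (g x)) / Real.log 2
            ≤ Real.logb 2 (N:ℝ)⁻¹ + Real.logb 2 p := by
          rw [← hdiv]
          exact (div_le_div_iff_of_pos_right hlog2).mpr hjensen
        linarith
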